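/- Every commutative, w*-approximately Connes amenable dual Banach algebra is weakly Connes amenable. -/

import Mathlib

noncomputable section

open Filter Topology

universe u

/-- The locally convex topology on `A` induced by a pairing `p : A → X → ℂ`,
i.e. the initial topology for the family of maps `a ↦ p a x`, `x : X`. -/
def topOfPairing {A X : Type*} (p : A → X → ℂ) : TopologicalSpace A :=
  TopologicalSpace.induced p Pi.topologicalSpace

theorem continuous_topOfPairing_iff {B A X : Type*} {tB : TopologicalSpace B}
    {p : A → X → ℂ} {f : B → A} :
    Continuous[tB, topOfPairing p] f ↔
      ∀ x, Continuous[tB, inferInstance] fun b => p (f b) x := by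
  rw [topOfPairing, continuous_induced_rng, continuous_pi_iff]
  exact Iff.rfl

theorem topOfPairing_eval_cont {A X : Type*} (p : A → X → ℂ) (x : X) :
    Continuous[topOfPairing p, inferInstance] fun a => p a x :=
  continuous_topOfPairing_iff.1 (@continuous_id _ (topOfPairing p)) x

/-- The weak topology `σ(E, E*)` on a normed space `E`. -/
def weakTop (E : Type u) [NormedAddCommGroup E] [NormedSpace ℂ E] : TopologicalSpace E :=
  topOfPairing fun x (φ : E →L[ℂ] ℂ) => φ x

/-- The weak-* topology `σ(E*, E)` on the dual of a normed space `E`. -/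
def wstarD (E : Type u) [NormedAddCommGroup E] [NormedSpace ℂ E] :
    TopologicalSpace (E →L[ℂ] ℂ) :=
  topOfPairing fun Λ (x : E) => Λ x

section Core

variable {A X : Type u} [NormedAddCommGroup A] [NormedSpace ℂ A]
  [NormedAddCommGroup X] [NormedSpace ℂ X]

/-- The weak-* topology `σ(A, X)` on a dual Banach space `A`, where the duality with the
predual `X` is implemented by an isometric linear isomorphism `ρ : A ≅ X*`. -/
def wstar (ρ : A ≃ₗᵢ[ℂ] (X →L[ℂ] ℂ)) : TopologicalSpace A :=
  topOfPairing fun a (x : X) => ρ a x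

theorem weakTop_cont_iff {B : Type*} {tB : TopologicalSpace B} {E : Type u}
    [NormedAddCommGroup E] [NormedSpace ℂ E] {f : B → E} :
    Continuous[tB, weakTop E] f ↔
      ∀ φ : E →L[ℂ] ℂ, Continuous[tB, inferInstance] fun b => φ (f b) :=
  continuous_topOfPairing_iff

namespace WeakCont

variable {B : Type*} {E F : Type u} [NormedAddCommGroup E] [NormedSpace ℂ E]
  [NormedAddCommGroup F] [NormedSpace ℂ F]

theorem clm_comp (tB : TopologicalSpace B) (L : E →L[ℂ] F) {f : B → E}
    (hf : Continuous[tB, weakTop E] f) : Continuous[tB, weakTop F] fun b => L (f b) :=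
  weakTop_cont_iff.2 fun φ => weakTop_cont_iff.1 hf (φ.comp L)

theorem add (tB : TopologicalSpace B) {f g : B → E} (hf : Continuous[tB, weakTop E] f)
    (hg : Continuous[tB, weakTop E] g) : Continuous[tB, weakTop E] fun b => f b + g b := by
  refine weakTop_cont_iff.2 fun φ => ?_
  letI := tB
  have h := (weakTop_cont_iff.1 hf φ).add (weakTop_cont_iff.1 hg φ)
  simp only [map_add]
  exact h

theorem const_smul (tB : TopologicalSpace B) {f : B → E} (hf : Continuous[tB, weakTop E] f)
    (c : ℂ) : Continuous[tB, weakTop E] fun b => c • f b := by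
  refine weakTop_cont_iff.2 fun φ => ?_
  letI := tB
  have h := (weakTop_cont_iff.1 hf φ).const_smul c
  simp only [map_smul, smul_eq_mul] at h ⊢
  exact h

theorem zero (tB : TopologicalSpace B) :
    Continuous[tB, weakTop E] fun _ : B => (0 : E) := by
  refine weakTop_cont_iff.2 fun φ => ?_
  letI := tB
  simpa using (continuous_const : Continuous fun _ : B => (0 : ℂ))

end WeakCont

/-- A Banach algebra structure on a normed space `A`: an associative continuous bilinear
multiplication satisfying `‖a * b‖ ≤ ‖a‖ * ‖b‖`. -/
structure BanachAlgStr (A : Type u) [NormedAddCommGroup A] [NormedSpace ℂ A] where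
  mul : A →L[ℂ] A →L[ℂ] A
  mul_assoc : ∀ a b c, mul (mul a b) c = mul a (mul b c)
  norm_mul_le : ∀ a b, ‖mul a b‖ ≤ ‖a‖ * ‖b‖

/-- `A`, with predual `X` (via `ρ`) and multiplication `S`, is a dual Banach algebra:
the multiplication is separately continuous for the weak-* topology `σ(A, X)`. -/
structure IsDualBanachAlgebra (ρ : A ≃ₗᵢ[ℂ] (X →L[ℂ] ℂ)) (S : BanachAlgStr A) : Prop where
  mul_left : ∀ a, Continuous[wstar ρ, wstar ρ] fun b => S.mul a b
  mul_right : ∀ a, Continuous[wstar ρ, wstar ρ] fun b => S.mul b a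

/-- A Banach `A`-bimodule structure (for the Banach algebra `(A, S)`) on a normed space `E`:
continuous bilinear left and right actions `l`, `r` which commute and are associative
for the multiplication `S.mul`. -/
structure BanachBimodule {A : Type u} [NormedAddCommGroup A] [NormedSpace ℂ A]
    (S : BanachAlgStr A) (E : Type u) [NormedAddCommGroup E] [NormedSpace ℂ E] where
  l : A →L[ℂ] E →L[ℂ] E
  r : A →L[ℂ] E →L[ℂ] E
  l_mul : ∀ a b x, l (S.mul a b) x = l a (l b x)
  r_mul : ∀ a b x, r (S.mul a b) x = r b (r a x)
  lr_comm : ∀ a b x, l a (r b x) = r b (l a x)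

/-- `A` as a Banach bimodule over itself, via multiplication. -/
def BanachAlgStr.toBimodule (S : BanachAlgStr A) : BanachBimodule S A where
  l := S.mul
  r := S.mul.flip
  l_mul := fun a b x => S.mul_assoc a b x
  r_mul := fun a b x => (S.mul_assoc x a b).symm
  lr_comm := fun a b x => (S.mul_assoc a x b).symm

variable {E : Type u} [NormedAddCommGroup E] [NormedSpace ℂ E]

/-- `σwc(E)`: the set of `x ∈ E` such that the maps `a ↦ a · x` and `a ↦ x · a` are
continuous from the weak-* topology on `A` into the weak topology on `E`.
It is a (closed) linear subspace of `E`. -/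
def sigmaWC (ρ : A ≃ₗᵢ[ℂ] (X →L[ℂ] ℂ)) {S : BanachAlgStr A} (M : BanachBimodule S E) :
    Submodule ℂ E where
  carrier := {x | Continuous[wstar ρ, weakTop E] (fun a => M.l a x) ∧
    Continuous[wstar ρ, weakTop E] fun a => M.r a x}
  add_mem' := by
    rintro x y ⟨h1, h2⟩ ⟨h3, h4⟩
    constructor
    · simp only [map_add]
      exact WeakCont.add _ h1 h3
    · simp only [map_add]
      exact WeakCont.add _ h2 h4
  zero_mem' := by
    constructor
    · simp only [map_zero]
      exact WeakCont.zero _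
    · simp only [map_zero]
      exact WeakCont.zero _
  smul_mem' := by
    rintro c x ⟨h1, h2⟩
    constructor
    · simp only [map_smul]
      exact WeakCont.const_smul _ h1 c
    · simp only [map_smul]
      exact WeakCont.const_smul _ h2 c

theorem smulL_mem_sigmaWC {ρ : A ≃ₗᵢ[ℂ] (X →L[ℂ] ℂ)} {S : BanachAlgStr A}
    {M : BanachBimodule S E} (hA : IsDualBanachAlgebra ρ S) {x : E}
    (hx : x ∈ sigmaWC ρ M) (a : A) : M.l a x ∈ sigmaWC ρ M := by
  obtain ⟨h1, h2⟩ := hx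
  constructor
  · have he : (fun c => M.l c (M.l a x)) = fun c => M.l (S.mul c a) x :=
      funext fun c => (M.l_mul c a x).symm
    rw [he]
    exact @Continuous.comp A A E (wstar ρ) (wstar ρ) (weakTop E) _ _ h1 (hA.mul_right a)
  · have he : (fun c => M.r c (M.l a x)) = fun c => M.l a (M.r c x) :=
      funext fun c => (M.lr_comm a c x).symm
    rw [he]
    exact WeakCont.clm_comp _ (M.l a) h2

theorem smulR_mem_sigmaWC {ρ : A ≃ₗᵢ[ℂ] (X →L[ℂ] ℂ)} {S : BanachAlgStr A}
    {M : BanachBimodule S E} (hA : IsDualBanachAlgebra ρ S) {x : E}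
    (hx : x ∈ sigmaWC ρ M) (a : A) : M.r a x ∈ sigmaWC ρ M := by
  obtain ⟨h1, h2⟩ := hx
  constructor
  · have he : (fun c => M.l c (M.r a x)) = fun c => M.r a (M.l c x) :=
      funext fun c => M.lr_comm c a x
    rw [he]
    exact WeakCont.clm_comp _ (M.r a) h1
  · have he : (fun c => M.r c (M.r a x)) = fun c => M.r (S.mul a c) x :=
      funext fun c => (M.r_mul a c x).symm
    rw [he]
    exact @Continuous.comp A A E (wstar ρ) (wstar ρ) (weakTop E) _ _ h2 (hA.mul_left a)

/-- `j_E : E* → σwc(E)*`, restriction of functionals (the adjoint of the inclusion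
`σwc(E) ↪ E`). -/
def jmap (ρ : A ≃ₗᵢ[ℂ] (X →L[ℂ] ℂ)) {S : BanachAlgStr A} (M : BanachBimodule S E)
    (φ : E →L[ℂ] ℂ) : ↥(sigmaWC ρ M) →L[ℂ] ℂ :=
  φ.comp (sigmaWC ρ M).subtypeL

/-- The left dual action of `A` on `σwc(E)*`: `(a · Λ)(x) = Λ(x · a)`. -/
def dualL {ρ : A ≃ₗᵢ[ℂ] (X →L[ℂ] ℂ)} {S : BanachAlgStr A} {M : BanachBimodule S E}
    (hA : IsDualBanachAlgebra ρ S) (a : A) (Λ : ↥(sigmaWC ρ M) →L[ℂ] ℂ) :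
    ↥(sigmaWC ρ M) →L[ℂ] ℂ :=
  Λ.comp (ContinuousLinearMap.codRestrict ((M.r a).comp (sigmaWC ρ M).subtypeL)
    (sigmaWC ρ M) fun x => smulR_mem_sigmaWC hA x.2 a)

/-- The right dual action of `A` on `σwc(E)*`: `(Λ · a)(x) = Λ(a · x)`. -/
def dualR {ρ : A ≃ₗᵢ[ℂ] (X →L[ℂ] ℂ)} {S : BanachAlgStr A} {M : BanachBimodule S E}
    (hA : IsDualBanachAlgebra ρ S) (a : A) (Λ : ↥(sigmaWC ρ M) →L[ℂ] ℂ) :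
    ↥(sigmaWC ρ M) →L[ℂ] ℂ :=
  Λ.comp (ContinuousLinearMap.codRestrict ((M.l a).comp (sigmaWC ρ M).subtypeL)
    (sigmaWC ρ M) fun x => smulL_mem_sigmaWC hA x.2 a)

/-- `D : A → E*` is a derivation for the dual bimodule actions of `A` on `E*`,
i.e. `D(ab) = a · D(b) + D(a) · b`, where `(a · φ)(x) = φ(x · a)` and
`(φ · a)(x) = φ(a · x)`. -/
def IsDerivationToDual (S : BanachAlgStr A) (M : BanachBimodule S E)
    (D : A →L[ℂ] (E →L[ℂ] ℂ)) : Prop :=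
  ∀ a b, D (S.mul a b) = (D b).comp (M.r a) + (D a).comp (M.l b)

/-- `D : A → E` is a derivation for the bimodule actions of `A` on `E`:
`D(ab) = a · D(b) + D(a) · b`. -/
def IsDerivationInto (S : BanachAlgStr A) (M : BanachBimodule S E)
    (D : A →L[ℂ] E) : Prop :=
  ∀ a b, D (S.mul a b) = M.l a (D b) + M.r b (D a)

/-- The dual Banach algebra `(A, ρ, S)` is weakly Connes amenable: for every derivation
`D : A → A*` such that `j_A ∘ D : A → σwc(A)*` is weak-*–weak-* continuous, the
derivation `j_A ∘ D` is inner, i.e. of the form `a ↦ a · Φ - Φ · a` for some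
`Φ ∈ σwc(A)*`. -/
def WeaklyConnesAmenable (ρ : A ≃ₗᵢ[ℂ] (X →L[ℂ] ℂ)) (S : BanachAlgStr A)
    (hA : IsDualBanachAlgebra ρ S) : Prop :=
  ∀ D : A →L[ℂ] (A →L[ℂ] ℂ), IsDerivationToDual S S.toBimodule D →
    Continuous[wstar ρ, wstarD ↥(sigmaWC ρ S.toBimodule)]
      (fun a => jmap ρ S.toBimodule (D a)) →
    ∃ Φ, ∀ a, jmap ρ S.toBimodule (D a) = dualL hA a Φ - dualR hA a Φ

end Core

section Connes

variable {A X : Type u} [NormedAddCommGroup A] [NormedSpace ℂ A]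
  [NormedAddCommGroup X] [NormedSpace ℂ X]

/-- A dual Banach `A`-bimodule `E = F*` is normal if the module actions of `A` on `E` are
weak-*–weak-* continuous. -/
def IsNormal (ρ : A ≃ₗᵢ[ℂ] (X →L[ℂ] ℂ)) {S : BanachAlgStr A} {F : Type u}
    [NormedAddCommGroup F] [NormedSpace ℂ F] (M : BanachBimodule S (F →L[ℂ] ℂ)) : Prop :=
  ∀ x, Continuous[wstar ρ, wstarD F] (fun a => M.l a x) ∧
    Continuous[wstar ρ, wstarD F] fun a => M.r a x

/-- The dual Banach algebra `(A, ρ, S)` is Connes amenable: for every normal dual Banach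
`A`-bimodule `E = F*`, every weak-*–weak-* continuous derivation `D : A → E` is inner. -/
def ConnesAmenable (ρ : A ≃ₗᵢ[ℂ] (X →L[ℂ] ℂ)) (S : BanachAlgStr A) : Prop :=
  ∀ (F : Type u) [NormedAddCommGroup F] [NormedSpace ℂ F] [CompleteSpace F],
    ∀ M : BanachBimodule S (F →L[ℂ] ℂ), IsNormal ρ M →
      ∀ D : A →L[ℂ] (F →L[ℂ] ℂ), IsDerivationInto S M D →
        Continuous[wstar ρ, wstarD F] (fun a => D a) →
        ∃ x, ∀ a, D a = M.l a x - M.r a x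

end Connes

section Approx

variable {A X : Type u} [NormedAddCommGroup A] [NormedSpace ℂ A]
  [NormedAddCommGroup X] [NormedSpace ℂ X]

/-- `D : A → E` is `w*`-approximately inner for the module actions `l`, `r` on `E` and the
weak-* topology `tE` on `E`: there is a net `(g_α)` in `E` with
`D(a) = w*-lim_α (a · g_α - g_α · a)` for every `a`. -/
def WstarApproxInner {A' : Type u} {E' : Type u} [AddCommGroup E']
    (tE : TopologicalSpace E') (l r : A' → E' → E') (D : A' → E') : Prop :=
  ∃ (ι : Type u) (fl : Filter ι), fl.NeBot ∧ ∃ g : ι → E',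
    ∀ a, Filter.Tendsto (fun i => l a (g i) - r a (g i)) fl (@nhds _ tE (D a))

/-- The dual Banach algebra `(A, ρ, S)` is `w*`-approximately Connes amenable: every
weak-*–weak-* continuous derivation into a normal dual Banach `A`-bimodule `E = F*`
is `w*`-approximately inner. -/
def WstarApproxConnesAmenable (ρ : A ≃ₗᵢ[ℂ] (X →L[ℂ] ℂ)) (S : BanachAlgStr A) : Prop :=
  ∀ (F : Type u) [NormedAddCommGroup F] [NormedSpace ℂ F] [CompleteSpace F],
    ∀ M : BanachBimodule S (F →L[ℂ] ℂ), IsNormal ρ M →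
      ∀ D : A →L[ℂ] (F →L[ℂ] ℂ), IsDerivationInto S M D →
        Continuous[wstar ρ, wstarD F] (fun a => D a) →
        WstarApproxInner (wstarD F) (fun a x => M.l a x) (fun a x => M.r a x)
          (fun a => D a)

/-- The dual Banach algebra `(A, ρ, S)` is `w*`-approximately weakly Connes amenable: for
every derivation `D : A → A*` such that `j_A ∘ D : A → σwc(A)*` is weak-*–weak-*
continuous, the derivation `j_A ∘ D` is `w*`-approximately inner. -/
def WstarApproxWeaklyConnesAmenable (ρ : A ≃ₗᵢ[ℂ] (X →L[ℂ] ℂ)) (S : BanachAlgStr A)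
    (hA : IsDualBanachAlgebra ρ S) : Prop :=
  ∀ D : A →L[ℂ] (A →L[ℂ] ℂ), IsDerivationToDual S S.toBimodule D →
    Continuous[wstar ρ, wstarD ↥(sigmaWC ρ S.toBimodule)]
      (fun a => jmap ρ S.toBimodule (D a)) →
    WstarApproxInner (wstarD ↥(sigmaWC ρ S.toBimodule))
      (fun a Λ => dualL hA a Λ) (fun a Λ => dualR hA a Λ)
      (fun a => jmap ρ S.toBimodule (D a))

end Approx

section AuxLemmas

variable {A X : Type u} [NormedAddCommGroup A] [NormedSpace ℂ A]
  [NormedAddCommGroup X] [NormedSpace ℂ X]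

/-- The canonical map `X → A* ≅ X**`, `ξ ↦ (a ↦ ρ a ξ)`. -/
def evalCLM (ρ : A ≃ₗᵢ[ℂ] (X →L[ℂ] ℂ)) : X →L[ℂ] (A →L[ℂ] ℂ) :=
  ((ContinuousLinearMap.compL ℂ A (X →L[ℂ] ℂ) ℂ).flip
     ρ.toLinearIsometry.toContinuousLinearMap).comp (NormedSpace.inclusionInDoubleDual ℂ X)

@[simp] theorem evalCLM_apply (ρ : A ≃ₗᵢ[ℂ] (X →L[ℂ] ℂ)) (ξ : X) (a : A) :
    evalCLM ρ ξ a = ρ a ξ := rfl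

theorem evalCLM_norm (ρ : A ≃ₗᵢ[ℂ] (X →L[ℂ] ℂ)) (ξ : X) : ‖evalCLM ρ ξ‖ = ‖ξ‖ := by
  have hΦ : ‖NormedSpace.inclusionInDoubleDual ℂ X ξ‖ = ‖ξ‖ :=
    (NormedSpace.inclusionInDoubleDualLi ℂ (E := X)).norm_map ξ
  apply le_antisymm
  · have h1 : evalCLM ρ ξ = (NormedSpace.inclusionInDoubleDual ℂ X ξ).comp
        ρ.toLinearIsometry.toContinuousLinearMap := rfl
    calc ‖evalCLM ρ ξ‖ ≤ ‖NormedSpace.inclusionInDoubleDual ℂ X ξ‖ *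
          ‖ρ.toLinearIsometry.toContinuousLinearMap‖ := by
            rw [h1]; exact ContinuousLinearMap.opNorm_comp_le _ _
      _ ≤ ‖ξ‖ * 1 := by
          apply mul_le_mul (le_of_eq hΦ) ρ.toLinearIsometry.norm_toContinuousLinearMap_le
            (norm_nonneg _) (norm_nonneg _)
      _ = ‖ξ‖ := mul_one _
  · have h2 : NormedSpace.inclusionInDoubleDual ℂ X ξ = (evalCLM ρ ξ).comp
        ρ.symm.toLinearIsometry.toContinuousLinearMap := by
      ext Λ
      simp [NormedSpace.dual_def]
    calc ‖ξ‖ = ‖NormedSpace.inclusionInDoubleDual ℂ X ξ‖ := hΦ.symm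
      _ ≤ ‖evalCLM ρ ξ‖ * ‖ρ.symm.toLinearIsometry.toContinuousLinearMap‖ := by
          rw [h2]; exact ContinuousLinearMap.opNorm_comp_le _ _
      _ ≤ ‖evalCLM ρ ξ‖ * 1 := by
          exact mul_le_mul_of_nonneg_left ρ.symm.toLinearIsometry.norm_toContinuousLinearMap_le
            (norm_nonneg _)
      _ = ‖evalCLM ρ ξ‖ := mul_one _

theorem isClosed_range_evalCLM [CompleteSpace X] (ρ : A ≃ₗᵢ[ℂ] (X →L[ℂ] ℂ)) :
    IsClosed (Set.range (evalCLM ρ)) :=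
  ((AddMonoidHomClass.isometry_of_norm (evalCLM ρ) (evalCLM_norm ρ)).isClosedEmbedding).isClosed_range

/-- Every `w*`-continuous bounded functional on `A` is evaluation at a point of the predual. -/
theorem wstar_cont_exists (ρ : A ≃ₗᵢ[ℂ] (X →L[ℂ] ℂ)) (ψ : A →L[ℂ] ℂ)
    (h : Continuous[wstar ρ, inferInstance] fun a => ψ a) : ∃ ξ : X, ∀ a, ψ a = ρ a ξ := by
  classical
  have h0 : (fun a => ψ a) ⁻¹' Metric.ball 0 1 ∈ @nhds A (wstar ρ) 0 := by
    have ht : Filter.Tendsto (fun a => ψ a) (@nhds A (wstar ρ) 0) (nhds (0 : ℂ)) := by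
      have := @Continuous.tendsto A ℂ (wstar ρ) _ _ h 0
      simpa using this
    exact ht (Metric.ball_mem_nhds 0 one_pos)
  rw [wstar, topOfPairing, nhds_induced] at h0
  obtain ⟨V, hV, hVs⟩ := Filter.mem_comap.1 h0
  have hq : (fun (x : X) => ρ (0 : A) x) = (0 : X → ℂ) := by funext x; simp
  rw [hq, nhds_pi] at hV
  obtain ⟨I, hI, W, hW, hWs⟩ := Filter.mem_pi.1 hV
  have hker : ∀ a : A, (∀ x ∈ I, ρ a x = 0) → ψ a = 0 := by
    intro a ha
    by_contra hne
    have hmem : ∀ c : ℂ, ψ (c • a) ∈ Metric.ball (0 : ℂ) 1 := by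
      intro c
      apply hVs
      apply Set.mem_preimage.2
      apply hWs
      intro x hx
      have hz : ρ (c • a) x = 0 := by simp [map_smul, ha x hx]
      show ρ (c • a) x ∈ W x
      rw [hz]
      simpa using mem_of_mem_nhds (hW x)
    have hc := hmem (2 / ψ a)
    rw [map_smul, smul_eq_mul, div_mul_cancel₀ (2 : ℂ) hne] at hc
    rw [Metric.mem_ball, dist_zero_right] at hc
    norm_num at hc
  haveI : Finite ↥I := hI.to_subtype
  haveI : Fintype ↥I := hI.fintype
  set L : ↥I → (A →ₗ[ℂ] ℂ) := fun x => (evalCLM ρ (x : X) : A →L[ℂ] ℂ).toLinearMap with hL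
  have hkerle : ⨅ x : ↥I, LinearMap.ker (L x) ≤ LinearMap.ker (ψ : A →ₗ[ℂ] ℂ) := by
    intro a ha
    rw [Submodule.mem_iInf] at ha
    refine LinearMap.mem_ker.2 (hker a fun x hx => ?_)
    have := ha ⟨x, hx⟩
    simpa [hL] using this
  obtain ⟨c, hc⟩ := (Submodule.mem_span_range_iff_exists_fun ℂ).1 (mem_span_of_iInf_ker_le_ker hkerle)
  refine ⟨∑ i : ↥I, c i • (i : X), fun a => ?_⟩
  have hca := LinearMap.congr_fun hc a
  simp only [LinearMap.coe_sum, Finset.sum_apply, LinearMap.smul_apply] at hca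
  rw [map_sum]
  have h2 : ∀ x : ↥I, ρ a (c x • (x : X)) = c x • (L x) a := by
    intro x; simp [hL, smul_eq_mul]
  rw [Finset.sum_congr rfl fun x _ => h2 x]
  exact_mod_cast hca.symm

/-- A norm limit of `w*`-continuous functionals is `w*`-continuous. -/
theorem wstar_cont_limit [CompleteSpace X] (ρ : A ≃ₗᵢ[ℂ] (X →L[ℂ] ℂ))
    {ψ : ℕ → A →L[ℂ] ℂ} {ψ' : A →L[ℂ] ℂ}
    (hc : ∀ n, Continuous[wstar ρ, inferInstance] fun a => ψ n a)
    (hlim : Filter.Tendsto ψ atTop (nhds ψ')) :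
    Continuous[wstar ρ, inferInstance] fun a => ψ' a := by
  have hmem : ∀ n, ψ n ∈ Set.range (evalCLM ρ) := by
    intro n
    obtain ⟨ξ, hξ⟩ := wstar_cont_exists ρ (ψ n) (hc n)
    exact ⟨ξ, by ext a; exact (hξ a).symm⟩
  have hψ' : ψ' ∈ Set.range (evalCLM ρ) :=
    (isClosed_range_evalCLM ρ).mem_of_tendsto hlim (Filter.Eventually.of_forall hmem)
  obtain ⟨ξ, hξ⟩ := hψ'
  have : (fun a => ψ' a) = fun a => ρ a ξ := by
    funext a; rw [← hξ]; rfl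
  rw [this]
  exact topOfPairing_eval_cont _ ξ

theorem sigmaWC_limit [CompleteSpace X] (ρ : A ≃ₗᵢ[ℂ] (X →L[ℂ] ℂ))
    (G : A →L[ℂ] (A →L[ℂ] A)) {u : ℕ → A} {x : A}
    (hu : ∀ n, Continuous[wstar ρ, weakTop A] fun a => G (u n) a)
    (hux : Filter.Tendsto u atTop (nhds x)) :
    Continuous[wstar ρ, weakTop A] fun a => G x a := by
  rw [weakTop_cont_iff]
  intro φ
  refine wstar_cont_limit ρ (ψ := fun n => φ.comp (G (u n))) (ψ' := φ.comp (G x)) ?_ ?_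
  · intro n
    exact weakTop_cont_iff.1 (hu n) φ
  · rw [tendsto_iff_norm_sub_tendsto_zero]
    have hb : ∀ n, ‖φ.comp (G (u n)) - φ.comp (G x)‖ ≤ ‖φ‖ * ‖G‖ * ‖u n - x‖ := by
      intro n
      rw [← ContinuousLinearMap.comp_sub, ← map_sub]
      calc ‖φ.comp (G (u n - x))‖ ≤ ‖φ‖ * ‖G (u n - x)‖ := ContinuousLinearMap.opNorm_comp_le _ _
        _ ≤ ‖φ‖ * (‖G‖ * ‖u n - x‖) :=
            mul_le_mul_of_nonneg_left (G.le_opNorm _) (norm_nonneg _)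
        _ = ‖φ‖ * ‖G‖ * ‖u n - x‖ := by ring
    have hx0 : Filter.Tendsto (fun n => ‖φ‖ * ‖G‖ * ‖u n - x‖) atTop (nhds 0) := by
      have := (tendsto_iff_norm_sub_tendsto_zero.1 hux).const_mul (‖φ‖ * ‖G‖)
      simpa using this
    exact squeeze_zero (fun n => norm_nonneg _) hb hx0

theorem isClosed_sigmaWC [CompleteSpace X] (ρ : A ≃ₗᵢ[ℂ] (X →L[ℂ] ℂ)) (S : BanachAlgStr A) :
    IsClosed ((sigmaWC ρ S.toBimodule : Set A)) := by
  apply IsSeqClosed.isClosed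
  intro u x hu hux
  constructor
  · have := sigmaWC_limit ρ S.mul.flip (u := u) (x := x) (fun n => (hu n).1) hux
    simpa [BanachAlgStr.toBimodule] using this
  · have := sigmaWC_limit ρ S.mul (u := u) (x := x) (fun n => (hu n).2) hux
    simpa [BanachAlgStr.toBimodule] using this

end AuxLemmas
set_option maxHeartbeats 2000000 in
/-- **Proposition 3.12.** Every commutative, `w*`-approximately Connes amenable dual
Banach algebra is weakly Connes amenable. -/
theorem comm_wstarApproxConnesAmenable_weaklyConnesAmenable {A X : Type u} [NormedAddCommGroup A] [NormedSpace ℂ A] [CompleteSpace A]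
    [NormedAddCommGroup X] [NormedSpace ℂ X] [CompleteSpace X]
    (ρ : A ≃ₗᵢ[ℂ] (X →L[ℂ] ℂ)) (S : BanachAlgStr A) (hA : IsDualBanachAlgebra ρ S)
    (hcomm : ∀ a b, S.mul a b = S.mul b a)
    (hACA : WstarApproxConnesAmenable ρ S) : WeaklyConnesAmenable ρ S hA := by
  intro D hD hcont
  haveI : CompleteSpace ↥(sigmaWC ρ S.toBimodule) :=
    (isClosed_sigmaWC ρ S).completeSpace_coe
  have hmemR : ∀ (a : A) (x : ↥(sigmaWC ρ S.toBimodule)),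
      S.mul (x : A) a ∈ sigmaWC ρ S.toBimodule := by
    intro a x
    have := smulR_mem_sigmaWC hA x.2 a
    simpa [BanachAlgStr.toBimodule] using this
  let R0 : A →ₗ[ℂ] ↥(sigmaWC ρ S.toBimodule) →ₗ[ℂ] ↥(sigmaWC ρ S.toBimodule) :=
    LinearMap.mk₂ ℂ (fun a x => (⟨S.mul (x : A) a, hmemR a x⟩ : ↥(sigmaWC ρ S.toBimodule)))
      (fun a b x => Subtype.ext (by simp))
      (fun c a x => Subtype.ext (by simp))
      (fun a x y => Subtype.ext (by simp))
      (fun a c x => Subtype.ext (by simp))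
  have hbound : ∀ (a : A) (x : ↥(sigmaWC ρ S.toBimodule)),
      ‖R0 a x‖ ≤ ‖S.mul‖ * ‖a‖ * ‖x‖ := by
    intro a x
    have h1 : ‖R0 a x‖ = ‖S.mul (x : A) a‖ := rfl
    rw [h1]
    calc ‖S.mul (x : A) a‖ ≤ ‖S.mul‖ * ‖x‖ * ‖a‖ := S.mul.le_opNorm₂ _ _
      _ = ‖S.mul‖ * ‖a‖ * ‖x‖ := mul_right_comm _ _ _
  let R : A →L[ℂ] ↥(sigmaWC ρ S.toBimodule) →L[ℂ] ↥(sigmaWC ρ S.toBimodule) :=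
    LinearMap.mkContinuous₂ R0 ‖S.mul‖ hbound
  let T : A →L[ℂ] (↥(sigmaWC ρ S.toBimodule) →L[ℂ] ℂ) →L[ℂ]
      (↥(sigmaWC ρ S.toBimodule) →L[ℂ] ℂ) :=
    ((ContinuousLinearMap.compL ℂ ↥(sigmaWC ρ S.toBimodule) ↥(sigmaWC ρ S.toBimodule) ℂ).flip).comp R
  have hT : ∀ (a : A) (Λ : ↥(sigmaWC ρ S.toBimodule) →L[ℂ] ℂ)
      (x : ↥(sigmaWC ρ S.toBimodule)), T a Λ x = Λ ⟨S.mul (x : A) a, hmemR a x⟩ :=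
    fun a Λ x => rfl
  let M' : BanachBimodule S (↥(sigmaWC ρ S.toBimodule) →L[ℂ] ℂ) :=
    { l := T
      r := T
      l_mul := fun a b Λ => by
        ext x
        rw [hT, hT, hT]
        exact congrArg Λ (Subtype.ext (S.mul_assoc (x : A) a b).symm)
      r_mul := fun a b Λ => by
        ext x
        rw [hT, hT, hT]
        exact congrArg Λ (Subtype.ext (show S.mul (x : A) (S.mul a b) =
          S.mul (S.mul (x : A) b) a by rw [S.mul_assoc, hcomm a b]))
      lr_comm := fun a b Λ => by
        ext x
        rw [hT, hT, hT, hT]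
        exact congrArg Λ (Subtype.ext (show S.mul (S.mul (x : A) a) b =
          S.mul (S.mul (x : A) b) a by rw [S.mul_assoc, S.mul_assoc, hcomm a b])) }
  have hTl : ∀ (a : A) (Λ : ↥(sigmaWC ρ S.toBimodule) →L[ℂ] ℂ)
      (x : ↥(sigmaWC ρ S.toBimodule)), M'.l a Λ x = Λ ⟨S.mul (x : A) a, hmemR a x⟩ := hT
  have hTr : ∀ (a : A) (Λ : ↥(sigmaWC ρ S.toBimodule) →L[ℂ] ℂ)
      (x : ↥(sigmaWC ρ S.toBimodule)), M'.r a Λ x = Λ ⟨S.mul (x : A) a, hmemR a x⟩ := hT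
  have hnormal : IsNormal ρ M' := by
    intro Λ
    have key : Continuous[wstar ρ, wstarD ↥(sigmaWC ρ S.toBimodule)] fun a => T a Λ := by
      refine continuous_topOfPairing_iff.2 fun x => ?_
      obtain ⟨φ, hφ, -⟩ := exists_extension_norm_eq (sigmaWC ρ S.toBimodule) Λ
      obtain ⟨h1x, h2x⟩ := x.2
      have hc := weakTop_cont_iff.1 h2x φ
      have heq : (fun a => T a Λ x) = fun a => φ (S.toBimodule.r a (x : A)) := by
        funext a
        rw [hT]
        have h3 : S.toBimodule.r a (x : A) = S.mul (x : A) a := by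
          simp [BanachAlgStr.toBimodule]
        rw [h3, ← hφ ⟨S.mul (x : A) a, hmemR a x⟩]
      rw [heq]
      exact hc
    exact ⟨key, key⟩
  let D' : A →L[ℂ] (↥(sigmaWC ρ S.toBimodule) →L[ℂ] ℂ) :=
    ((ContinuousLinearMap.compL ℂ ↥(sigmaWC ρ S.toBimodule) A ℂ).flip
      (sigmaWC ρ S.toBimodule).subtypeL).comp D
  have hD' : ∀ a, D' a = jmap ρ S.toBimodule (D a) := fun a => rfl
  have hder : IsDerivationInto S M' D' := by
    intro a b
    ext x
    have h1 := congrFun (congrArg DFunLike.coe (hD a b)) (x : A)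
    simp only [ContinuousLinearMap.add_apply, ContinuousLinearMap.comp_apply,
      BanachAlgStr.toBimodule, ContinuousLinearMap.flip_apply] at h1
    calc D' (S.mul a b) x = D (S.mul a b) (x : A) := rfl
      _ = D b (S.mul (x : A) a) + D a (S.mul b (x : A)) := h1
      _ = D b (S.mul (x : A) a) + D a (S.mul (x : A) b) := by rw [hcomm b (x : A)]
      _ = (M'.l a (D' b) + M'.r b (D' a)) x := by
          rw [ContinuousLinearMap.add_apply, hTl, hTr]
          rfl
  have hcont' : Continuous[wstar ρ, wstarD ↥(sigmaWC ρ S.toBimodule)] fun a => D' a := by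
    have he : (fun a => D' a) = fun a => jmap ρ S.toBimodule (D a) := funext hD'
    rw [he]
    exact hcont
  obtain ⟨ι, fl, hfl, g, hg⟩ := hACA ↥(sigmaWC ρ S.toBimodule) M' hnormal D' hder hcont'
  haveI := hfl
  have hzero : ∀ a, D' a = 0 := by
    intro a
    have h1 := hg a
    have he : (fun i => M'.l a (g i) - M'.r a (g i)) =
        fun _ => (0 : ↥(sigmaWC ρ S.toBimodule) →L[ℂ] ℂ) := by
      funext i
      show T a (g i) - T a (g i) = 0
      exact sub_self _
    rw [he] at h1
    ext x
    have hev := topOfPairing_eval_cont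
      (fun (Λ : ↥(sigmaWC ρ S.toBimodule) →L[ℂ] ℂ) (y : ↥(sigmaWC ρ S.toBimodule)) => Λ y) x
    have h2 : Filter.Tendsto (fun _ : ι => (0 : ↥(sigmaWC ρ S.toBimodule) →L[ℂ] ℂ) x) fl
        (nhds (D' a x)) :=
      (@Continuous.tendsto _ _ (wstarD ↥(sigmaWC ρ S.toBimodule)) _ _ hev (D' a)).comp h1
    simpa using tendsto_nhds_unique h2 tendsto_const_nhds
  refine ⟨0, fun a => ?_⟩
  have hL0 : dualL hA a (0 : ↥(sigmaWC ρ S.toBimodule) →L[ℂ] ℂ) = 0 :=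
    ContinuousLinearMap.zero_comp _
  have hR0 : dualR hA a (0 : ↥(sigmaWC ρ S.toBimodule) →L[ℂ] ℂ) = 0 :=
    ContinuousLinearMap.zero_comp _
  rw [← hD' a, hzero a, hL0, hR0]
  simp
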